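/- Let p > 3 be prime and write r = 2 + n(p-1)p^t with t ≥ 0 and n ≥ 0. Then Σ_{0<j<r, j≡2 mod (p-1)} C(r,j) ≡ p(2-r)/2 (mod p^{t+2}). -/

import Mathlib

set_option linter.unusedSectionVars false

open Finset

section helpers

variable (p t : ℕ) [hpf : Fact p.Prime]

/-- reduction map -/
def phi : ZMod (p^(t+2)) →+* ZMod p :=
  ZMod.castHom (dvd_pow_self p (by omega : t+2 ≠ 0)) (ZMod p)

variable {p t}

lemma pow_t2_eq_zero : ((p : ZMod (p^(t+2)))^(t+2)) = 0 := by
  have : ((p^(t+2) : ℕ) : ZMod (p^(t+2))) = 0 := ZMod.natCast_self _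
  push_cast at this
  exact this

lemma exists_of_phi_zero {x : ZMod (p^(t+2))} (h : phi p t x = 0) :
    ∃ y, x = (p : ZMod (p^(t+2))) * y := by
  have hx : x = ((x.val : ℕ) : ZMod (p^(t+2))) := by
    simp [ZMod.natCast_val, ZMod.cast_id]
  have h2 : ((x.val : ℕ) : ZMod p) = 0 := by
    have := h
    rw [hx] at this
    simpa [phi] using this
  rw [ZMod.natCast_eq_zero_iff] at h2
  obtain ⟨m, hm⟩ := h2
  exact ⟨(m : ZMod (p^(t+2))), by rw [hx, hm]; push_cast; ring⟩

lemma isUnit_of_phi_ne {x : ZMod (p^(t+2))} (h : phi p t x ≠ 0) : IsUnit x := by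
  have hx : x = ((x.val : ℕ) : ZMod (p^(t+2))) := by
    simp [ZMod.natCast_val, ZMod.cast_id]
  rw [hx]
  rw [ZMod.isUnit_iff_coprime]
  have h2 : ¬ (p ∣ x.val) := by
    intro hd
    apply h
    rw [hx]
    simp only [phi, map_natCast]
    exact (ZMod.natCast_eq_zero_iff _ _).2 hd
  exact Nat.Coprime.pow_right _ (Nat.coprime_comm.1 ((Nat.Prime.coprime_iff_not_dvd hpf.out).2 h2))

lemma phi_dvd {x : ZMod (p^(t+2))} (h : phi p t x = 0) : (p : ZMod (p^(t+2))) ∣ x := by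
  obtain ⟨y, hy⟩ := exists_of_phi_zero h; exact ⟨y, hy⟩

/-- lifted power equality -/
lemma pow_lift {a b : ZMod (p^(t+2))} (h : (p : ZMod (p^(t+2))) ∣ a - b) :
    a^(p^(t+1)) = b^(p^(t+1)) := by
  have := dvd_sub_pow_of_dvd_sub h (t+1)
  rw [pow_t2_eq_zero, zero_dvd_iff, sub_eq_zero] at this
  exact this

end helpers

section teich

variable (p t : ℕ) [hpf : Fact p.Prime]

/-- Teichmüller-style lift -/
def Tch (a : (ZMod p)ˣ) : ZMod (p^(t+2)) :=
  (((a : ZMod p).val : ℕ) : ZMod (p^(t+2)))^(p^(t+1))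

variable {p t}

lemma phi_Tch (a : (ZMod p)ˣ) : phi p t (Tch p t a) = (a : ZMod p) := by
  simp only [Tch, phi, map_pow, map_natCast]
  rw [ZMod.natCast_val, ZMod.cast_id]
  exact ZMod.pow_card_pow _

lemma Tch_mul (a b : (ZMod p)ˣ) : Tch p t (a*b) = Tch p t a * Tch p t b := by
  rw [Tch, Tch, Tch, ← mul_pow]
  apply pow_lift
  have hv : ((a*b : (ZMod p)ˣ) : ZMod p).val = ((a : ZMod p).val * (b : ZMod p).val) % p := by
    rw [Units.val_mul, ZMod.val_mul]
  rw [hv, ← Nat.cast_mul]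
  set x := (a : ZMod p).val * (b : ZMod p).val with hx
  have hsplit : x = p * (x / p) + x % p := (Nat.div_add_mod x p).symm
  have hkey : ((x % p : ℕ) : ZMod (p^(t+2))) - ((x:ℕ) : ZMod (p^(t+2)))
      = - ((p : ZMod (p^(t+2))) * ((x / p : ℕ) : ZMod (p^(t+2)))) := by
    nth_rewrite 2 [hsplit]
    push_cast
    ring
  rw [hkey]
  exact dvd_neg.2 ⟨_, rfl⟩

lemma Tch_pow_psub1 (a : (ZMod p)ˣ) : (Tch p t a)^(p-1) = 1 := by
  have h1 : (((a : ZMod p).val : ℕ) : ZMod (p^(t+2)))^(p-1) - 1 =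
      (((a : ZMod p).val : ℕ) : ZMod (p^(t+2)))^(p-1) - 1 := rfl
  have hdvd : (p : ZMod (p^(t+2))) ∣ (((a : ZMod p).val : ℕ) : ZMod (p^(t+2)))^(p-1) - 1 := by
    apply phi_dvd
    have hne : (a : ZMod p) ≠ 0 := a.ne_zero
    simp only [phi, map_sub, map_pow, map_natCast, map_one]
    rw [ZMod.natCast_val, ZMod.cast_id, ZMod.pow_card_sub_one_eq_one hne, sub_self]
  have := pow_lift (t := t) hdvd
  rw [one_pow] at this
  rw [Tch, ← pow_mul, mul_comm (p^(t+1)) (p-1), pow_mul]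
  exact this

lemma Tch_one : Tch p t 1 = 1 := by
  rw [Tch]
  have h1 : ((1 : (ZMod p)ˣ) : ZMod p) = 1 := rfl
  rw [h1, ZMod.val_one_eq_one_mod, Nat.mod_eq_of_lt (by have := hpf.out.two_le; omega)]
  simp

lemma Tch_neg_one (hp3 : 3 < p) : Tch p t (-1) = -1 := by
  have hsq : Tch p t (-1) * Tch p t (-1) = 1 := by
    rw [← Tch_mul, neg_one_mul, neg_neg, Tch_one]
  have h2 : (Tch p t (-1) - 1) * (Tch p t (-1) + 1) = 0 := by
    linear_combination hsq
  have hunit : IsUnit (Tch p t (-1) - 1) := by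
    apply isUnit_of_phi_ne
    rw [map_sub, phi_Tch, map_one]
    intro h
    have h1 : (-1 : ZMod p) = 1 := by
      have := sub_eq_zero.1 h
      simpa using this
    have h0 : ((2:ℕ) : ZMod p) = 0 := by push_cast; linear_combination -h1
    rw [ZMod.natCast_eq_zero_iff] at h0
    have := Nat.le_of_dvd (by norm_num) h0
    omega
  have := (IsUnit.mul_right_eq_zero hunit).1 h2
  exact eq_neg_of_add_eq_zero_left this

lemma Tch_orth (hp3 : 3 < p) (k : ℕ) :
    ∑ a : (ZMod p)ˣ, (Tch p t a)^k =
      if (p-1) ∣ k then (((p - 1 : ℕ)) : ZMod (p^(t+2))) else 0 := by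
  by_cases hd : (p-1) ∣ k
  · rw [if_pos hd]
    obtain ⟨m, hm⟩ := hd
    have hone : ∀ a : (ZMod p)ˣ, (Tch p t a)^k = 1 := by
      intro a
      rw [hm, pow_mul, Tch_pow_psub1, one_pow]
    simp only [hone]
    rw [Finset.sum_const, Finset.card_univ, ZMod.card_units p]
    simp
  · rw [if_neg hd]
    obtain ⟨g, hg⟩ := IsCyclic.exists_generator (α := (ZMod p)ˣ)
    have hord : orderOf g = p - 1 := by
      rw [orderOf_eq_card_of_forall_mem_zpowers hg, Nat.card_eq_fintype_card, ZMod.card_units p]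
    have hgk : (g : ZMod p)^k ≠ 1 := by
      intro h
      have : g^k = 1 := by
        ext
        rw [Units.val_pow_eq_pow_val]
        exact h
      exact hd (hord ▸ orderOf_dvd_of_pow_eq_one this)
    have hre : ∑ a : (ZMod p)ˣ, (Tch p t (g*a))^k = ∑ a : (ZMod p)ˣ, (Tch p t a)^k :=
      Fintype.sum_equiv (Equiv.mulLeft g) _ _ (fun a => rfl)
    have hre2 : ∑ a : (ZMod p)ˣ, (Tch p t (g*a))^k
        = (Tch p t g)^k * ∑ a : (ZMod p)ˣ, (Tch p t a)^k := by
      rw [Finset.mul_sum]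
      congr 1
      ext a
      rw [Tch_mul, mul_pow]
    have heq : ((Tch p t g)^k - 1) * (∑ a : (ZMod p)ˣ, (Tch p t a)^k) = 0 := by
      rw [sub_mul, one_mul, ← hre2, hre, sub_self]
    have hunit : IsUnit ((Tch p t g)^k - 1) := by
      apply isUnit_of_phi_ne
      rw [map_sub, map_pow, phi_Tch, map_one]
      intro h
      exact hgk (by linear_combination h)
    exact (IsUnit.mul_right_eq_zero hunit).1 heq

end teich

section intlemmas

lemma choose_tail (m : ℕ) (y : ℤ) :
    ∃ c : ℤ, (1+y)^m = 1 + m*y + (Nat.choose m 2 : ℤ)*y^2 + y^3*c := by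
  induction m with
  | zero => exact ⟨0, by norm_num⟩
  | succ m ih =>
    obtain ⟨c, hc⟩ := ih
    refine ⟨c + (Nat.choose m 2 : ℤ) + y*c, ?_⟩
    have hch : (Nat.choose (m+1) 2 : ℤ) = (Nat.choose m 1 : ℤ) + (Nat.choose m 2 : ℤ) := by
      rw [show (2:ℕ) = 1 + 1 from rfl, Nat.choose_succ_succ]
      push_cast
      ring
    rw [pow_succ, hc]
    rw [Nat.choose_one_right] at hch
    push_cast [hch]
    ring

lemma step_lemma {p : ℕ} (hp : p.Prime) (hp3 : 3 < p) (s : ℕ) (hs : 1 ≤ s) (γ : ℤ) :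
    (p:ℤ)^(s+2) ∣ (1+(p:ℤ)^s*γ)^p - (1+(p:ℤ)^(s+1)*γ) := by
  obtain ⟨c, hc⟩ := choose_tail p ((p:ℤ)^s*γ)
  obtain ⟨d, hd⟩ := hp.dvd_choose_self (k := 2) (by norm_num) (by omega)
  have hid : (1+(p:ℤ)^s*γ)^p - (1+(p:ℤ)^(s+1)*γ)
      = (Nat.choose p 2 : ℤ)*((p:ℤ)^s*γ)^2 + ((p:ℤ)^s*γ)^3*c := by
    rw [hc]
    push_cast
    ring
  rw [hid]
  apply dvd_add
  · have : (Nat.choose p 2 : ℤ)*((p:ℤ)^s*γ)^2 = (p:ℤ)^(2*s+1) * ((d:ℤ) * γ^2) := by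
      rw [hd]
      push_cast
      ring
    rw [this]
    exact Dvd.dvd.mul_right (pow_dvd_pow _ (by omega)) _
  · have : ((p:ℤ)^s*γ)^3*c = (p:ℤ)^(3*s) * (γ^3*c) := by ring
    rw [this]
    exact Dvd.dvd.mul_right (pow_dvd_pow _ (by omega)) _

lemma lift_one_add {p : ℕ} (hp : p.Prime) (hp3 : 3 < p) (t : ℕ) (b : ℤ) :
    (p:ℤ)^(t+2) ∣ (1+(p:ℤ)*b)^(p^t) - (1+(p:ℤ)^(t+1)*b) := by
  induction t with
  | zero => simp
  | succ t ih =>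
    obtain ⟨e, he⟩ := ih
    have hX : (1+(p:ℤ)*b)^(p^t) = 1 + (p:ℤ)^(t+1)*(b + p*e) := by
      have : (1+(p:ℤ)*b)^(p^t) - (1+(p:ℤ)^(t+1)*b) = (p:ℤ)^(t+2)*e := he
      rw [sub_eq_iff_eq_add] at this
      rw [this]
      ring
    have hstep := step_lemma hp hp3 (t+1) (by omega) (b + p*e)
    rw [← hX] at hstep
    have hpow : ((1+(p:ℤ)*b)^(p^t))^p = (1+(p:ℤ)*b)^(p^(t+1)) := by
      rw [← pow_mul, ← pow_succ]
    rw [hpow] at hstep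
    have h2 : (p:ℤ)^(t+1+2) ∣ (1+(p:ℤ)^(t+1+1)*(b+p*e)) - (1+(p:ℤ)^(t+1+1)*b) :=
      ⟨e, by ring⟩
    have hsum := dvd_add hstep h2
    have hre : ((1+(p:ℤ)*b)^(p^(t+1)) - (1+(p:ℤ)^(t+1+1)*(b+p*e)))
        + ((1+(p:ℤ)^(t+1+1)*(b+p*e)) - (1+(p:ℤ)^(t+1+1)*b))
        = (1+(p:ℤ)*b)^(p^(t+1)) - (1+(p:ℤ)^(t+1+1)*b) := by ring
    rw [hre] at hsum
    exact hsum

lemma one_add_p_pow {p t : ℕ} [hpf : Fact p.Prime] (hp3 : 3 < p) (β : ZMod (p^(t+2))) :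
    (1 + (p : ZMod (p^(t+2)))*β)^(p^t) = 1 + (p : ZMod (p^(t+2)))^(t+1)*β := by
  obtain ⟨e, he⟩ := lift_one_add hpf.out hp3 t ((β.val : ℕ) : ℤ)
  have h := congrArg (fun z : ℤ => (z : ZMod (p^(t+2)))) he
  push_cast at h
  have hβ : ((β.val : ℕ) : ZMod (p^(t+2))) = β := by
    simp [ZMod.natCast_val, ZMod.cast_id]
  rw [hβ] at h
  linear_combination h + (e : ZMod (p^(t+2))) * pow_t2_eq_zero (p := p) (t := t)

lemma nilp_pow {N : ℕ} (z : ZMod N) (hz : z*z = 0) (n : ℕ) :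
    (1+z)^n = 1 + n*z := by
  induction n with
  | zero => simp
  | succ n ih =>
    rw [pow_succ, ih]
    push_cast
    have : (1 + (n:ZMod N)*z)*(1+z) = 1 + ((n:ZMod N)+1)*z + (n:ZMod N)*(z*z) := by ring
    rw [this, hz]
    ring

end intlemmas

section keysum

lemma mod_iff {p : ℕ} (hp3 : 3 < p) (j : ℕ) :
    (p-1) ∣ (j + (p-3)) ↔ j % (p-1) = 2 % (p-1) := by
  set m := p - 1 with hm
  have hm3 : 3 ≤ m := by omega
  have h3 : p - 3 = m - 2 := by omega
  have h2m : 2 % m = 2 := Nat.mod_eq_of_lt (by omega)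
  rw [h3, h2m]
  constructor
  · rintro ⟨q, hq⟩
    have hq1 : 1 ≤ q := by
      rcases Nat.eq_zero_or_pos q with h | h
      · rw [h, Nat.mul_zero] at hq; omega
      · exact h
    have hsplit : m * q = m * (q-1) + m := by
      nth_rewrite 1 [show q = (q-1)+1 by omega]
      ring
    rw [hsplit] at hq
    have hj : j = m * (q-1) + 2 := by omega
    rw [hj, Nat.mul_add_mod]
    exact Nat.mod_eq_of_lt (by omega)
  · intro h
    have hd : j = m * (j / m) + 2 := by
      have := Nat.div_add_mod j m
      omega
    refine ⟨j / m + 1, ?_⟩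
    rw [Nat.mul_add, Nat.mul_one]
    omega

lemma key_sum {p t : ℕ} [hpf : Fact p.Prime] (hp3 : 3 < p) (e : ℕ) :
    ∑ a : (ZMod p)ˣ, (Tch p t a)^(p-3) * (1 + Tch p t a)^e
      = ((p-1 : ℕ) : ZMod (p^(t+2))) *
        ∑ j ∈ (Finset.range (e+1)).filter (fun j => j % (p-1) = 2 % (p-1)),
          (Nat.choose e j : ZMod (p^(t+2))) := by
  have hexp : ∀ a : (ZMod p)ˣ, (1 + Tch p t a)^e
      = ∑ j ∈ Finset.range (e+1), (Tch p t a)^j * (Nat.choose e j : ZMod (p^(t+2))) := by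
    intro a
    rw [show (1 + Tch p t a) = (Tch p t a + 1) from add_comm _ _, add_pow]
    simp [one_pow]
  calc ∑ a : (ZMod p)ˣ, (Tch p t a)^(p-3) * (1 + Tch p t a)^e
      = ∑ a : (ZMod p)ˣ, ∑ j ∈ Finset.range (e+1),
          (Tch p t a)^(j + (p-3)) * (Nat.choose e j : ZMod (p^(t+2))) := by
        apply Finset.sum_congr rfl
        intro a _
        rw [hexp, Finset.mul_sum]
        apply Finset.sum_congr rfl
        intro j _
        rw [pow_add (Tch p t a) j (p-3)]
        ring
    _ = ∑ j ∈ Finset.range (e+1),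
          (∑ a : (ZMod p)ˣ, (Tch p t a)^(j + (p-3))) * (Nat.choose e j : ZMod (p^(t+2))) := by
        rw [Finset.sum_comm]
        simp [Finset.sum_mul]
    _ = ∑ j ∈ Finset.range (e+1),
          (if j % (p-1) = 2 % (p-1) then ((p-1 : ℕ) : ZMod (p^(t+2))) else 0)
            * (Nat.choose e j : ZMod (p^(t+2))) := by
        apply Finset.sum_congr rfl
        intro j _
        rw [Tch_orth hp3]
        congr 1
        simp only [mod_iff hp3]
    _ = ((p-1 : ℕ) : ZMod (p^(t+2))) *
        ∑ j ∈ (Finset.range (e+1)).filter (fun j => j % (p-1) = 2 % (p-1)),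
          (Nat.choose e j : ZMod (p^(t+2))) := by
        rw [Finset.mul_sum, Finset.sum_filter]
        apply Finset.sum_congr rfl
        intro j _
        split_ifs <;> simp

end keysum

section filters

lemma filter_two {p : ℕ} (hp3 : 3 < p) :
    (Finset.range 3).filter (fun j => j % (p-1) = 2 % (p-1)) = {2} := by
  have hm3 : 3 ≤ p - 1 := by omega
  have h2m : 2 % (p-1) = 2 := Nat.mod_eq_of_lt (by omega)
  ext j
  simp only [Finset.mem_filter, Finset.mem_range, Finset.mem_singleton]
  constructor
  · rintro ⟨hj, hP⟩
    rw [h2m, Nat.mod_eq_of_lt (by omega)] at hP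
    exact hP
  · rintro rfl
    exact ⟨by norm_num, rfl⟩

lemma filter_p1 {p : ℕ} (hp3 : 3 < p) :
    (Finset.range (p+2)).filter (fun j => j % (p-1) = 2 % (p-1)) = {2, p+1} := by
  have hm3 : 3 ≤ p - 1 := by omega
  have h2m : 2 % (p-1) = 2 := Nat.mod_eq_of_lt (by omega)
  ext j
  simp only [Finset.mem_filter, Finset.mem_range, Finset.mem_insert, Finset.mem_singleton]
  constructor
  · rintro ⟨hj, hP⟩
    rw [h2m] at hP
    have hd : j = (p-1) * (j / (p-1)) + 2 := by
      have := Nat.div_add_mod j (p-1)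
      omega
    rcases Nat.lt_or_ge (j / (p-1)) 2 with hq | hq
    · interval_cases h : (j / (p-1))
      · left; omega
      · right; omega
    · exfalso
      have : (p-1) * 2 ≤ (p-1) * (j / (p-1)) := Nat.mul_le_mul_left _ hq
      omega
  · rintro (rfl | rfl)
    · exact ⟨by omega, rfl⟩
    · refine ⟨by omega, ?_⟩
      have : p + 1 = (p-1) + 2 := by omega
      rw [this, Nat.add_mod_left]

lemma filter_r {p t n r : ℕ} (hp3 : 3 < p) (hr : r = 2 + n * (p - 1) * p^t) :
    (Finset.range (r+1)).filter (fun j => j % (p-1) = 2 % (p-1))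
      = insert r ((Finset.Ioo 0 r).filter (fun j => j % (p-1) = 2 % (p-1))) := by
  have hPr : r % (p-1) = 2 % (p-1) := by
    rw [hr, show 2 + n * (p-1) * p^t = 2 + (n * p^t) * (p-1) by ring, Nat.add_mul_mod_self_right]
  have hP0 : ¬ ((0:ℕ) % (p-1) = 2 % (p-1)) := by
    rw [Nat.zero_mod, Nat.mod_eq_of_lt (by omega)]
    omega
  ext j
  simp only [Finset.mem_filter, Finset.mem_range, Finset.mem_insert, Finset.mem_Ioo]
  constructor
  · rintro ⟨hj, hP⟩
    rcases Nat.eq_or_lt_of_le (Nat.lt_succ_iff.1 hj) with h | h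
    · left; exact h
    · right
      refine ⟨⟨?_, h⟩, hP⟩
      rcases Nat.eq_zero_or_pos j with h0 | h0
      · exact absurd (h0 ▸ hP) hP0
      · exact h0
  · rintro (rfl | ⟨⟨h0, hjr⟩, hP⟩)
    · exact ⟨by omega, hPr⟩
    · exact ⟨by omega, hP⟩

end filters

theorem stmt_7 (p n t r : ℕ) (hp : p.Prime) (hp3 : 3 < p)
    (hr : r = 2 + n * (p - 1) * p^t) :
    (p : ℤ)^(t + 2) ∣ 2 * (∑ j ∈ (Finset.Ioo 0 r).filter
        (fun j => j % (p - 1) = 2 % (p - 1)), (r.choose j : ℤ))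
      - (p : ℤ) * (2 - (r : ℤ)) := by
  haveI : Fact p.Prime := ⟨hp⟩
  have hcast : ((p^(t+2) : ℕ) : ℤ) = (p:ℤ)^(t+2) := by push_cast; rfl
  rw [← hcast, ← ZMod.intCast_zmod_eq_zero_iff_dvd]
  push_cast
  set P : ZMod (p^(t+2)) := (p : ZMod (p^(t+2))) with hP
  set M : ZMod (p^(t+2)) := ((p - 1 : ℕ) : ZMod (p^(t+2))) with hMdef
  set SR : ZMod (p^(t+2)) :=
    ∑ j ∈ (Finset.Ioo 0 r).filter (fun j => j % (p-1) = 2 % (p-1)),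
      (r.choose j : ZMod (p^(t+2))) with hSR
  -- the three key sums
  have F1 : ∑ a : (ZMod p)ˣ, (Tch p t a)^(p-3) * (1 + Tch p t a)^r = M * (1 + SR) := by
    rw [key_sum hp3 r, filter_r hp3 hr, Finset.sum_insert (by simp), Nat.choose_self]
    push_cast
    ring
  have F2 : ∑ a : (ZMod p)ˣ, (Tch p t a)^(p-3) * (1 + Tch p t a)^2 = M := by
    rw [key_sum hp3 2, show (2:ℕ)+1 = 3 by norm_num, filter_two hp3, Finset.sum_singleton,
      Nat.choose_self]
    push_cast
    ring
  have F3 : ∑ a : (ZMod p)ˣ, (Tch p t a)^(p-3) * (1 + Tch p t a)^(p+1)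
      = M * (((p+1).choose 2 : ZMod (p^(t+2))) + 1) := by
    rw [key_sum hp3 (p+1), show p+1+1 = p+2 by omega, filter_p1 hp3,
      Finset.sum_insert (by simp; omega), Finset.sum_singleton, Nat.choose_self]
    push_cast
    ring
  -- pointwise identity
  have pointwise : ∀ a : (ZMod p)ˣ, (1 + Tch p t a)^r
      = (1 + Tch p t a)^2 + (n : ZMod (p^(t+2))) * P^t
          * ((1 + Tch p t a)^(p+1) - (1 + Tch p t a)^2) := by
    intro a
    by_cases hzero : (1 : ZMod p) + (a : ZMod p) = 0
    · have ha : a = -1 := by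
        ext
        rw [Units.val_neg, Units.val_one]
        linear_combination hzero
      have h0 : 1 + Tch p t a = 0 := by
        rw [ha, Tch_neg_one hp3]
        ring
      rw [h0, zero_pow (by omega : r ≠ 0), zero_pow (by omega : 2 ≠ 0),
        zero_pow (by omega : p+1 ≠ 0)]
      ring
    · have hphi : phi p t (1 + Tch p t a) = 1 + (a : ZMod p) := by
        rw [map_add, map_one, phi_Tch]
      generalize hu : (1 + Tch p t a : ZMod (p^(t+2))) = u at hphi ⊢
      have hfer : phi p t (u^(p-1) - 1) = 0 := by
        rw [map_sub, map_pow, hphi, map_one,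
          ZMod.pow_card_sub_one_eq_one hzero, sub_self]
      obtain ⟨β, hβ⟩ := exists_of_phi_zero hfer
      have hu1 : u^(p-1) = 1 + P*β := by rw [hP]; linear_combination hβ
      have hup : u^((p-1)*p^t) = 1 + P^(t+1)*β := by
        rw [pow_mul, hu1, hP, one_add_p_pow hp3]
      have hz : (P^(t+1)*β)*(P^(t+1)*β) = 0 := by
        have h1 : (P^(t+1)*β)*(P^(t+1)*β) = P^(t+2)*(P^t*β*β) := by ring
        rw [h1, hP, pow_t2_eq_zero (p := p) (t := t), zero_mul]
      have hn : (1 + P^(t+1)*β)^n = 1 + (n : ZMod (p^(t+2)))*(P^(t+1)*β) :=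
        nilp_pow _ hz n
      have hre : u ^ r = u ^ 2 * (u ^ ((p-1)*p^t))^n := by
        rw [← pow_mul, ← pow_add]
        congr 1
        rw [hr]
        ring
      rw [show p+1 = 2+(p-1) by omega, pow_add u 2 (p-1), hu1, hre, hup, hn]
      ring
  -- combine
  have Fsum' : ∑ a : (ZMod p)ˣ, (Tch p t a)^(p-3) * (1 + Tch p t a)^r
      = ∑ a : (ZMod p)ˣ, (Tch p t a)^(p-3) * (1 + Tch p t a)^2
        + (n : ZMod (p^(t+2))) * P^t
          * (∑ a : (ZMod p)ˣ, (Tch p t a)^(p-3) * (1 + Tch p t a)^(p+1)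
            - ∑ a : (ZMod p)ˣ, (Tch p t a)^(p-3) * (1 + Tch p t a)^2) := by
    rw [← Finset.sum_sub_distrib, Finset.mul_sum, ← Finset.sum_add_distrib]
    apply Finset.sum_congr rfl
    intro a _
    rw [pointwise a]
    ring
  have Fsum : M * (1 + SR) = M + (n : ZMod (p^(t+2))) * P^t
      * (M * (((p+1).choose 2 : ZMod (p^(t+2))) + 1) - M) := by
    rw [← F1, Fsum', F2, F3]
  have hE2 : M * SR = (n : ZMod (p^(t+2))) * P^t * M * (((p+1).choose 2 : ZMod (p^(t+2)))) := by
    linear_combination Fsum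
  -- numeric facts
  have hpodd : 2 ∣ p + 1 := by
    rcases Nat.even_or_odd p with he | ho
    · exfalso
      rw [Nat.Prime.even_iff hp] at he
      omega
    · obtain ⟨k, hk⟩ := ho
      omega
  have h2c : 2 * Nat.choose (p+1) 2 = (p+1)*p := by
    rw [Nat.choose_two_right, Nat.add_sub_cancel]
    rw [Nat.mul_div_cancel' (Dvd.dvd.mul_right hpodd p)]
  have hc2R : 2 * (((p+1).choose 2 : ZMod (p^(t+2)))) = (P+1)*P := by
    have hcst := congrArg (fun z : ℕ => (z : ZMod (p^(t+2)))) h2c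
    push_cast at hcst
    rw [hP]
    linear_combination hcst
  have hM : M = P - 1 := by
    rw [hMdef, hP, Nat.cast_sub (by omega : 1 ≤ p)]
    push_cast
    ring
  have hrR : (r : ZMod (p^(t+2))) = 2 + (n : ZMod (p^(t+2))) * M * P^t := by
    rw [hr, hMdef, hP]
    push_cast [Nat.cast_sub (by omega : 1 ≤ p)]
    ring
  have hMunit : IsUnit M := by
    apply isUnit_of_phi_ne
    rw [hMdef, map_natCast]
    intro h
    rw [ZMod.natCast_eq_zero_iff] at h
    have := Nat.le_of_dvd (by omega) h
    omega
  have hpow0 : P^(t+2) = 0 := by rw [hP]; exact pow_t2_eq_zero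
  rw [hrR]
  rw [hM] at hE2 ⊢
  have hMunit' : IsUnit (P - 1) := hM ▸ hMunit
  apply (IsUnit.mul_right_eq_zero hMunit').1
  linear_combination 2*hE2 + (n : ZMod (p^(t+2)))*P^t*(P-1)*hc2R
    + 2*(n : ZMod (p^(t+2)))*(P-1)*hpow0
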